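/- Let f : ℝⁿ → ℝ be convex with a sphere of support of radius r > 0 to its graph from above at (x₀, f(x₀)), and suppose f is differentiable at x₀. Then for every m < r/(1+|∇f(x₀)|²)^{3/2}, f is sub-quadratically convex at x₀ with modulus 1/m, i.e. f(x) ≤ f(x₀) + ⟨∇f(x₀), x−x₀⟩ + (1/(2m))|x−x₀|² near x₀; consequently K(f,x₀) ≤ (1+|∇f(x₀)|²)^{3/2}/r. -/

import Mathlib

open Filter Metric Set
open scoped RealInnerProductSpace Topology

/-- Slodkowski's generalized largest eigenvalue `K(u,x₀)`. -/
noncomputable def Kfn {n : ℕ} (u : EuclideanSpace ℝ (Fin n) → ℝ)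
    (x₀ : EuclideanSpace ℝ (Fin n)) : EReal :=
  Filter.limsup (fun ε : ℝ =>
    sSup ((fun h : EuclideanSpace ℝ (Fin n) =>
      ((2 / ε ^ 2 * (u (x₀ + ε • h) - u x₀ - ε * ⟪gradient u x₀, h⟫) : ℝ) : EReal)) ''
        {h | ‖h‖ = 1}))
    (𝓝[≠] (0 : ℝ))

private lemma grad_inner {n : ℕ} (f : EuclideanSpace ℝ (Fin n) → ℝ)
    (x₀ v : EuclideanSpace ℝ (Fin n)) :
    ⟪gradient f x₀, v⟫ = fderiv ℝ f x₀ v := by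
  simp [gradient, InnerProductSpace.toDual_symm_apply]

private lemma convex_tangent {n : ℕ} (f : EuclideanSpace ℝ (Fin n) → ℝ)
    (hconv : ConvexOn ℝ Set.univ f) (x₀ y : EuclideanSpace ℝ (Fin n))
    (hdiff : DifferentiableAt ℝ f x₀) :
    f x₀ + ⟪gradient f x₀, y - x₀⟫ ≤ f y := by
  set v := y - x₀ with hv
  have h1 : HasDerivAt (fun t : ℝ => t • v + x₀) v 0 := by
    simpa using ((hasDerivAt_id (0:ℝ)).smul_const v).add_const x₀
  have h0 : (fun t : ℝ => t • v + x₀) 0 = x₀ := by simp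
  have hq : HasDerivAt (fun t : ℝ => f (t • v + x₀)) (fderiv ℝ f x₀ v) 0 := by
    have := (h0 ▸ hdiff.hasFDerivAt).comp_hasDerivAt (0:ℝ) h1
    simpa [Function.comp_def] using this
  have hqc : ConvexOn ℝ Set.univ (fun t : ℝ => f (t • v + x₀)) := by
    have := hconv.comp_affineMap (AffineMap.lineMap x₀ y)
    simpa [Function.comp_def, AffineMap.lineMap_apply, vsub_eq_sub, vadd_eq_add, hv] using this
  have hs := hqc.le_slope_of_hasDerivAt (mem_univ (0:ℝ)) (mem_univ (1:ℝ)) one_pos hq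
  have hgi : ⟪gradient f x₀, v⟫ = fderiv ℝ f x₀ v := grad_inner f x₀ v
  rw [hgi]
  simp [slope_def_field] at hs
  rw [hv, sub_add_cancel] at hs
  linarith

private lemma tangency {n : ℕ} (f : EuclideanSpace ℝ (Fin n) → ℝ) (x₀ : EuclideanSpace ℝ (Fin n))
    (hdiff : DifferentiableAt ℝ f x₀) (c1 : EuclideanSpace ℝ (Fin n)) (c2 r : ℝ)
    (key1 : ∀ y, r ^ 2 ≤ ‖y - c1‖ ^ 2 + (f y - c2) ^ 2)
    (key2 : ‖x₀ - c1‖ ^ 2 + (f x₀ - c2) ^ 2 = r ^ 2) :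
    (x₀ - c1) + (f x₀ - c2) • gradient f x₀ = 0 := by
  set ψ : EuclideanSpace ℝ (Fin n) → ℝ :=
    fun x => ⟪x - c1, x - c1⟫ + (f x - c2) * (f x - c2) with hψ
  have hψval : ∀ x, ψ x = ‖x - c1‖ ^ 2 + (f x - c2) ^ 2 := by
    intro x
    show (⟪x - c1, x - c1⟫ + (f x - c2) * (f x - c2) : ℝ) = _
    rw [real_inner_self_eq_norm_sq]; ring
  have hmin : IsLocalMin ψ x₀ := by
    apply Filter.Eventually.of_forall
    intro x
    rw [hψval, hψval, key2]
    exact key1 x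
  have hid : HasFDerivAt (fun x : EuclideanSpace ℝ (Fin n) => x - c1)
      (ContinuousLinearMap.id ℝ _) x₀ := (hasFDerivAt_id x₀).sub_const c1
  have hsq := hid.inner ℝ hid
  have hf' := hdiff.hasFDerivAt
  have hsub : HasFDerivAt (fun x => f x - c2) (fderiv ℝ f x₀) x₀ := hf'.sub_const c2
  have hmul := hsub.mul hsub
  have hD := hsq.add hmul
  have hzero := hmin.fderiv_eq_zero
  have hDze : ((fderivInnerCLM ℝ (x₀ - c1, x₀ - c1)).comp
        ((ContinuousLinearMap.id ℝ _).prod (ContinuousLinearMap.id ℝ _))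
      + ((f x₀ - c2) • fderiv ℝ f x₀ + (f x₀ - c2) • fderiv ℝ f x₀)) = 0 := by
    rw [← hD.fderiv]; exact hzero
  have hv : ∀ v, ⟪x₀ - c1, v⟫ + (f x₀ - c2) * (fderiv ℝ f x₀ v) = 0 := by
    intro v
    have h := ContinuousLinearMap.ext_iff.mp hDze v
    simp only [ContinuousLinearMap.add_apply, ContinuousLinearMap.comp_apply,
      ContinuousLinearMap.coe_prod, ContinuousLinearMap.prod_apply,
      ContinuousLinearMap.id_apply, ContinuousLinearMap.smul_apply,
      ContinuousLinearMap.zero_apply, fderivInnerCLM_apply, smul_eq_mul] at h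
    linarith [h, real_inner_comm v (x₀ - c1)]
  have hgv : ∀ v, ⟪(x₀ - c1) + (f x₀ - c2) • gradient f x₀, v⟫ = 0 := by
    intro v
    rw [inner_add_left, inner_smul_left]
    have hgi : ⟪gradient f x₀, v⟫ = fderiv ℝ f x₀ v := grad_inner f x₀ v
    simp only [starRingEnd_apply, star_trivial, hgi]
    linarith [hv v]
  have := hgv ((x₀ - c1) + (f x₀ - c2) • gradient f x₀)
  rwa [inner_self_eq_zero] at this

set_option maxHeartbeats 1000000 in
theorem stmt13 {n : ℕ} (f : EuclideanSpace ℝ (Fin n) → ℝ)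
    (x₀ : EuclideanSpace ℝ (Fin n)) (hconv : ConvexOn ℝ Set.univ f)
    (hdiff : DifferentiableAt ℝ f x₀)
    (c : WithLp 2 (EuclideanSpace ℝ (Fin n) × ℝ)) (r : ℝ) (hr : 0 < r)
    (hmem : (WithLp.equiv 2 (EuclideanSpace ℝ (Fin n) × ℝ)).symm (x₀, f x₀) ∈ Metric.sphere c r)
    (hdisj : ∀ y : EuclideanSpace ℝ (Fin n),
      (WithLp.equiv 2 (EuclideanSpace ℝ (Fin n) × ℝ)).symm (y, f y) ∉ Metric.ball c r)
    (habove : f ((WithLp.equiv 2 (EuclideanSpace ℝ (Fin n) × ℝ)) c).1 <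
      ((WithLp.equiv 2 (EuclideanSpace ℝ (Fin n) × ℝ)) c).2) :
    (∀ m : ℝ, 0 < m → m < r / (1 + ‖gradient f x₀‖ ^ 2) ^ ((3 : ℝ) / 2) →
      ∃ ε > 0, ∀ x ∈ Metric.ball x₀ ε,
        f x ≤ f x₀ + ⟪gradient f x₀, x - x₀⟫ + 1 / (2 * m) * ‖x - x₀‖ ^ 2) ∧
    Kfn f x₀ ≤ (((1 + ‖gradient f x₀‖ ^ 2) ^ ((3 : ℝ) / 2) / r : ℝ) : EReal) := by
  set g := gradient f x₀ with hgdef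
  set G := ‖g‖ with hGdef
  have hGnn : 0 ≤ G := norm_nonneg g
  set c1 : EuclideanSpace ℝ (Fin n) := c.fst with hc1
  set c2 : ℝ := c.snd with hc2
  have habove' : f c1 < c2 := habove
  clear_value G
  have key1 : ∀ y, r ^ 2 ≤ ‖y - c1‖ ^ 2 + (f y - c2) ^ 2 := by
    intro y
    have h := hdisj y
    rw [Metric.mem_ball, not_lt] at h
    rw [WithLp.prod_dist_eq_of_L2] at h
    simp only [WithLp.equiv_symm_apply, WithLp.toLp_fst, WithLp.toLp_snd, dist_eq_norm] at h
    rw [Real.norm_eq_abs] at h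
    have h2 := Real.sq_sqrt (by positivity : (0:ℝ) ≤ ‖y - c.fst‖ ^ 2 + |f y - c.snd| ^ 2)
    rw [hc1, hc2]
    nlinarith [Real.sqrt_nonneg (‖y - c.fst‖ ^ 2 + |f y - c.snd| ^ 2),
      abs_nonneg (f y - c.snd), sq_abs (f y - c.snd)]
  have key2 : ‖x₀ - c1‖ ^ 2 + (f x₀ - c2) ^ 2 = r ^ 2 := by
    have h := hmem
    rw [Metric.mem_sphere, WithLp.prod_dist_eq_of_L2] at h
    simp only [WithLp.equiv_symm_apply, WithLp.toLp_fst, WithLp.toLp_snd, dist_eq_norm] at h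
    rw [Real.norm_eq_abs] at h
    have h2 := Real.sq_sqrt (by positivity : (0:ℝ) ≤ ‖x₀ - c.fst‖ ^ 2 + |f x₀ - c.snd| ^ 2)
    rw [hc1, hc2]
    nlinarith [sq_abs (f x₀ - c.snd)]
  have htan0 := tangency f x₀ hdiff c1 c2 r key1 key2
  have hconv0 := convex_tangent f hconv x₀ c1 hdiff
  clear_value c1 c2
  clear hmem hdisj habove
  set b : ℝ := f x₀ - c2 with hbdef
  have htan : (x₀ - c1) + b • g = 0 := htan0
  clear_value b
  clear htan0
  have ha : x₀ - c1 = -(b • g) := by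
    rw [eq_neg_iff_add_eq_zero]; exact htan
  have hnormsq : ‖x₀ - c1‖ ^ 2 = b ^ 2 * G ^ 2 := by
    rw [ha, norm_neg, norm_smul, mul_pow, Real.norm_eq_abs, sq_abs, hGdef]
  have hfx0 : f x₀ = c2 + b := by rw [hbdef]; ring
  have hfc1 : f c1 ≤ c2 - r := by
    have h1 := key1 c1
    simp only [sub_self, norm_zero] at h1
    nlinarith [habove']
  have hconvineq : f x₀ + b * G ^ 2 ≤ f c1 := by
    have he : ⟪g, c1 - x₀⟫ = b * G ^ 2 := by
      have h3 : c1 - x₀ = b • g := by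
        rw [← neg_sub x₀ c1, ha, neg_neg]
      rw [h3, real_inner_smul_right, real_inner_self_eq_norm_sq, hGdef]
    rw [← hgdef, he] at hconv0
    exact hconv0
  clear_value g
  have hbneg : b * (1 + G ^ 2) ≤ -r := by
    have hexp : b * (1 + G ^ 2) = b + b * G ^ 2 := by ring
    linarith [hconvineq, hfc1]
  have hb0 : b < 0 := by
    by_contra hb
    push_neg at hb
    linarith [mul_nonneg hb (by positivity : (0:ℝ) ≤ 1 + G ^ 2), hr]
  obtain ⟨β, hβdef⟩ : ∃ β : ℝ, β = -b := ⟨-b, rfl⟩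
  have hβ0 : 0 < β := by rw [hβdef]; linarith
  have hβr : β ^ 2 * (1 + G ^ 2) = r ^ 2 := by
    have e1 : β ^ 2 * (1 + G ^ 2) = b ^ 2 + b ^ 2 * G ^ 2 := by rw [hβdef]; ring
    linarith [key2, hnormsq, e1]
  have hpow : (1 + G ^ 2) ^ ((3:ℝ)/2) = r ^ 3 / β ^ 3 := by
    have h1 : (1 + G ^ 2) = (r / β) ^ 2 := by
      rw [div_pow, eq_div_iff (by positivity : (β:ℝ) ^ 2 ≠ 0)]
      linarith [hβr]
    rw [h1, ← Real.rpow_natCast (r / β) 2, ← Real.rpow_mul (by positivity : (0:ℝ) ≤ r / β)]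
    norm_num
    rw [div_pow]
  have part1 : ∀ m : ℝ, 0 < m → m < r / (1 + G ^ 2) ^ ((3 : ℝ) / 2) →
      ∃ ε > 0, ∀ x ∈ Metric.ball x₀ ε,
        f x ≤ f x₀ + ⟪g, x - x₀⟫ + 1 / (2 * m) * ‖x - x₀‖ ^ 2 := by
    intro m hm hmM
    rw [hpow] at hmM
    have hrw : r / (r ^ 3 / β ^ 3) = β ^ 3 / r ^ 2 := by
      field_simp
    rw [hrw, lt_div_iff₀ (by positivity : (0:ℝ) < r ^ 2)] at hmM
    have hmg : m * (1 + G ^ 2) < β := by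
      have hc : (m * (1 + G ^ 2)) * β ^ 2 < β * β ^ 2 := by
        calc (m * (1 + G ^ 2)) * β ^ 2 = m * (β ^ 2 * (1 + G ^ 2)) := by ring
          _ = m * r ^ 2 := by rw [hβr]
          _ < β ^ 3 := hmM
          _ = β * β ^ 2 := by ring
      exact lt_of_mul_lt_mul_right hc (sq_nonneg β)
    obtain ⟨δ, hδdef⟩ : ∃ δ : ℝ, δ = β / m - 1 - G ^ 2 := ⟨_, rfl⟩
    have hδ0 : 0 < δ := by
      have h1 : 1 + G ^ 2 < β / m := by
        rw [lt_div_iff₀ hm]; linarith [hmg]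
      rw [hδdef]; linarith
    obtain ⟨ε₁, hε₁, hcont⟩ := Metric.continuousAt_iff.mp hdiff.continuousAt β hβ0
    have hsδ : 0 < Real.sqrt δ := Real.sqrt_pos.mpr hδ0
    refine ⟨min ε₁ (min (m * Real.sqrt δ) (m * δ / (2 * (G + 1)))), ?_, ?_⟩
    · exact lt_min hε₁ (lt_min (mul_pos hm hsδ)
        (div_pos (mul_pos hm hδ0) (by positivity)))
    intro x hx
    rw [Metric.mem_ball, dist_eq_norm] at hx
    set h : EuclideanSpace ℝ (Fin n) := x - x₀ with hhdef
    have hb1 : ‖h‖ < ε₁ := lt_of_lt_of_le hx (min_le_left _ _)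
    have hb2 : ‖h‖ ≤ m * Real.sqrt δ :=
      le_trans hx.le (le_trans (min_le_right _ _) (min_le_left _ _))
    have hb3 : ‖h‖ ≤ m * δ / (2 * (G + 1)) :=
      le_trans hx.le (le_trans (min_le_right _ _) (min_le_right _ _))
    clear hx
    set s : ℝ := ⟪g, h⟫ with hsdef
    set t : ℝ := ‖h‖ ^ 2 with htdef
    have hfx : f x < c2 := by
      have hd := hcont (show dist x x₀ < ε₁ by rw [dist_eq_norm]; exact hb1)
      rw [Real.dist_eq] at hd
      have habs := abs_lt.mp hd
      have hβb : β = -b := hβdef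
      linarith [habs.2]
    have hst : |s| ≤ G * ‖h‖ := by
      rw [hsdef, hGdef]
      exact abs_real_inner_le_norm g h
    have hs2 : s ^ 2 ≤ G ^ 2 * t := by
      have h5 := mul_self_le_mul_self (abs_nonneg s) hst
      calc s ^ 2 = |s| * |s| := by rw [abs_mul_abs_self]; ring
        _ ≤ (G * ‖h‖) * (G * ‖h‖) := h5
        _ = G ^ 2 * t := by rw [htdef]; ring
    have ht0 : 0 ≤ t := by rw [htdef]; positivity
    have ht1 : t ≤ m ^ 2 * δ := by
      have h5 := mul_self_le_mul_self (norm_nonneg h) hb2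
      calc t = ‖h‖ * ‖h‖ := by rw [htdef]; ring
        _ ≤ (m * Real.sqrt δ) * (m * Real.sqrt δ) := h5
        _ = m ^ 2 * (Real.sqrt δ * Real.sqrt δ) := by ring
        _ = m ^ 2 * δ := by rw [Real.mul_self_sqrt hδ0.le]
    have hs1 : s ≤ m * δ / 2 := by
      have h2 : s ≤ G * ‖h‖ := le_trans (le_abs_self s) hst
      have h3 : G * ‖h‖ ≤ G * (m * δ / (2 * (G + 1))) :=
        mul_le_mul_of_nonneg_left hb3 hGnn
      have h4 : G * (m * δ / (2 * (G + 1))) ≤ m * δ / 2 := by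
        rw [← mul_div_assoc, div_le_div_iff₀ (by positivity) (by norm_num : (0:ℝ) < 2)]
        linarith [mul_pos hm hδ0]
      linarith
    clear_value s t
    have hkey : b ^ 2 + 2 * b * s - t ≤ (f x - c2) ^ 2 := by
      have h1 := key1 x
      have hinner : ⟪h, b • g⟫ = b * s := by
        rw [real_inner_smul_right, hsdef, real_inner_comm]
      have hdecomp : ‖x - c1‖ ^ 2 = t + 2 * (-(b * s)) + b ^ 2 * G ^ 2 := by
        have hxc : x - c1 = h + (x₀ - c1) := by rw [hhdef]; abel
        rw [hxc, norm_add_sq_real, hnormsq, ha, inner_neg_right, hinner, htdef]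
      linarith [h1, hdecomp, key2, hnormsq]
    clear_value h
    show f x ≤ f x₀ + s + 1 / (2 * m) * t
    rcases le_or_gt 0 (b + s + 1 / (2 * m) * t) with hR | hR
    · rw [hfx0]; linarith
    · have expand : b ^ 2 + 2 * b * s - t - (b + s + 1 / (2 * m) * t) ^ 2
          = t * (δ - s / m - t / (4 * m ^ 2)) + (G ^ 2 * t - s ^ 2) := by
        rw [hδdef, hβdef]
        field_simp
        ring
      have hbr : δ / 4 ≤ δ - s / m - t / (4 * m ^ 2) := by
        have e1 : s / m ≤ δ / 2 := by
          rw [div_le_div_iff₀ hm (by norm_num : (0:ℝ) < 2)]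
          linarith [hs1]
        have e2 : t / (4 * m ^ 2) ≤ δ / 4 := by
          rw [div_le_div_iff₀ (by positivity) (by norm_num : (0:ℝ) < 4)]
          linarith [ht1]
        linarith
      have halg : (b + s + 1 / (2 * m) * t) ^ 2 ≤ b ^ 2 + 2 * b * s - t := by
        have h6 := mul_le_mul_of_nonneg_left hbr ht0
        have h7 : 0 ≤ t * (δ / 4) := mul_nonneg ht0 (by positivity)
        linarith [expand, hs2, h6, h7]
      have hfc : f x - c2 < 0 := by linarith
      have hfin : f x - c2 ≤ b + s + 1 / (2 * m) * t := by
        by_contra hcon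
        push_neg at hcon
        have hp : (f x - c2 - (b + s + 1 / (2 * m) * t))
            * (f x - c2 + (b + s + 1 / (2 * m) * t)) < 0 :=
          mul_neg_of_pos_of_neg (by linarith) (by linarith)
        have hpe : (f x - c2 - (b + s + 1 / (2 * m) * t))
            * (f x - c2 + (b + s + 1 / (2 * m) * t))
            = (f x - c2) ^ 2 - (b + s + 1 / (2 * m) * t) ^ 2 := by ring
        linarith [hkey, halg]
      rw [hfx0]; linarith
  constructor
  · exact part1
  · have hpowpos : 0 < (1 + G ^ 2) ^ ((3:ℝ)/2) := by positivity
    set M : ℝ := r / (1 + G ^ 2) ^ ((3:ℝ)/2) with hMdef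
    have hM0 : 0 < M := div_pos hr hpowpos
    have hMr : (1 + G ^ 2) ^ ((3:ℝ)/2) / r = 1 / M := by
      rw [hMdef, one_div_div]
    have key : ∀ m : ℝ, 0 < m → m < M → Kfn f x₀ ≤ (((1/m : ℝ)) : EReal) := by
      intro m hm hmM
      obtain ⟨ε₀, hε₀, hbound⟩ := part1 m hm hmM
      unfold Kfn
      refine Filter.limsup_le_of_le (by isBoundedDefault) ?_
      have hev : ∀ᶠ ε : ℝ in 𝓝 (0:ℝ), |ε| < ε₀ := by
        filter_upwards [Metric.ball_mem_nhds (0:ℝ) hε₀] with ε hε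
        rwa [Metric.mem_ball, Real.dist_eq, sub_zero] at hε
      filter_upwards [eventually_nhdsWithin_of_eventually_nhds hev, self_mem_nhdsWithin]
        with ε hε (hε0 : ε ≠ 0)
      apply sSup_le
      rintro z ⟨h, hh, rfl⟩
      simp only [mem_setOf_eq] at hh
      rw [EReal.coe_le_coe_iff, ← hgdef]
      have hmemball : x₀ + ε • h ∈ Metric.ball x₀ ε₀ := by
        rw [Metric.mem_ball, dist_eq_norm, add_sub_cancel_left, norm_smul, Real.norm_eq_abs,
          hh, mul_one]
        exact hε
      have hb2 := hbound _ hmemball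
      rw [add_sub_cancel_left, real_inner_smul_right, norm_smul, Real.norm_eq_abs, hh,
        mul_one, sq_abs] at hb2
      have hε2 : (0:ℝ) < ε ^ 2 := by positivity
      calc 2 / ε ^ 2 * (f (x₀ + ε • h) - f x₀ - ε * ⟪g, h⟫)
          ≤ 2 / ε ^ 2 * (1 / (2 * m) * ε ^ 2) := by
            apply mul_le_mul_of_nonneg_left (by linarith [hb2]) (by positivity)
        _ = 1 / m := by field_simp
    rw [hMr]
    refine le_of_forall_gt_imp_ge_of_dense ?_
    intro y hy
    obtain ⟨z, hz1, hz2⟩ := EReal.exists_between_coe_real hy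
    have hzr : (1/M : ℝ) < z := EReal.coe_lt_coe_iff.mp hz1
    have hz0' : (0:ℝ) < z := lt_trans (by positivity) hzr
    have hm : (0:ℝ) < 1/z := by positivity
    have hmM : 1/z < M := by
      rw [div_lt_iff₀ hz0']
      have h9 := (div_lt_iff₀ hM0).mp hzr
      linarith
    have hK := key (1/z) hm hmM
    rw [one_div_one_div] at hK
    exact hK.trans hz2.le
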